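/- For positive integers n and k with k ≤ n, if a is a part size in a balanced partition (i.e., a ∈ {⌊n/k⌋, ⌈n/k⌉}) and b ∈ {⌊a/m⌋, ⌈a/m⌉} for a positive integer m, then b ∈ {⌊n/(km)⌋, ⌈n/(km)⌉}. -/
import Mathlib

lemma ceil_le_floor_succ (n d : ℕ) (hd : 0 < d) : n ⌈/⌉ d ≤ n / d + 1 := by
  rw [Nat.ceilDiv_eq_add_pred_div]
  calc (n + d - 1) / d ≤ (n - 1 + d) / d := Nat.div_le_div_right (by omega)
    _ = (n - 1) / d + 1 := Nat.add_div_right _ hd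
    _ ≤ n / d + 1 := by
        exact Nat.add_le_add_right (Nat.div_le_div_right (by omega)) 1

lemma ceil_ceil (n k m : ℕ) (hk : 0 < k) (hm : 0 < m) :
    (n ⌈/⌉ k) ⌈/⌉ m = n ⌈/⌉ (k * m) := by
  have hkm : 0 < k * m := Nat.mul_pos hk hm
  refine le_antisymm ?_ ?_
  · rw [ceilDiv_le_iff_le_smul hm, ceilDiv_le_iff_le_smul hk, smul_eq_mul, smul_eq_mul,
      ← Nat.mul_assoc]
    have := le_smul_ceilDiv (b := n) hkm
    simpa [smul_eq_mul] using this
  · rw [ceilDiv_le_iff_le_smul hkm, smul_eq_mul]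
    calc n ≤ k * (n ⌈/⌉ k) := by simpa [smul_eq_mul] using le_smul_ceilDiv (b := n) hk
      _ ≤ k * (m * ((n ⌈/⌉ k) ⌈/⌉ m)) := by
          exact Nat.mul_le_mul_left k (by simpa [smul_eq_mul] using le_smul_ceilDiv (b := n ⌈/⌉ k) hm)
      _ = k * m * ((n ⌈/⌉ k) ⌈/⌉ m) := by ring

theorem balanced_split_size_compose
    (n k m : ℕ) (hn : 0 < n) (hk : 0 < k) (hm : 0 < m) (hkn : k ≤ n)
    (a b : ℕ)
    (ha : a = n / k ∨ a = n ⌈/⌉ k)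
    (hb : b = a / m ∨ b = a ⌈/⌉ m) :
    b = n / (k * m) ∨ b = n ⌈/⌉ (k * m) := by
  have hceil : n ⌈/⌉ (k * m) ≤ n / (k * m) + 1 := ceil_le_floor_succ n (k * m) (by positivity)
  have hkm1 : 1 ≤ k * m := Nat.mul_pos hk hm
  have hfc : n / (k * m) ≤ n ⌈/⌉ (k * m) := by
    rw [Nat.ceilDiv_eq_add_pred_div]
    exact Nat.div_le_div_right (by omega)
  have halo : n / k ≤ a := by
    rcases ha with rfl | rfl
    · exact le_rfl
    · rw [Nat.ceilDiv_eq_add_pred_div]; exact Nat.div_le_div_right (by omega)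
  have hahi : a ≤ n ⌈/⌉ k := by
    rcases ha with rfl | rfl
    · rw [Nat.ceilDiv_eq_add_pred_div]; exact Nat.div_le_div_right (by omega)
    · exact le_rfl
  have hlo : n / (k * m) ≤ b := by
    rcases hb with rfl | rfl
    · rw [← Nat.div_div_eq_div_mul]
      exact Nat.div_le_div_right halo
    · calc n / (k * m) = (n / k) / m := (Nat.div_div_eq_div_mul n k m).symm
        _ ≤ a / m := Nat.div_le_div_right halo
        _ ≤ a ⌈/⌉ m := by
            rw [Nat.ceilDiv_eq_add_pred_div]; exact Nat.div_le_div_right (by omega)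
  have hhi : b ≤ n ⌈/⌉ (k * m) := by
    have h1 : b ≤ a ⌈/⌉ m := by
      rcases hb with rfl | rfl
      · rw [Nat.ceilDiv_eq_add_pred_div]; exact Nat.div_le_div_right (by omega)
      · exact le_rfl
    calc b ≤ a ⌈/⌉ m := h1
      _ ≤ (n ⌈/⌉ k) ⌈/⌉ m := by
          rw [Nat.ceilDiv_eq_add_pred_div, Nat.ceilDiv_eq_add_pred_div]
          exact Nat.div_le_div_right (by omega)
      _ = n ⌈/⌉ (k * m) := ceil_ceil n k m hk hm
  omega
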